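/- arXiv:quant-ph/0208043 — 2 statements merged into one kernel-verified Lean document; each statement's English description precedes it below -/
import Mathlib

section
/- Let n ≥ 1 be an integer and m = ⌈log₂(n+1)⌉. For every natural number w with w ≤ n: w ≠ 0 if and only if there exists an integer k with 1 ≤ k ≤ m such that exp(2πi·w/2^k) = −1. -/
/-- Correctness of the exact Or-reduction from `n` bits to `m = ⌈log₂(n+1)⌉`
bits: for `w ≤ n`, `w ≠ 0` iff `exp(2πi·w/2^k) = −1` for some `1 ≤ k ≤ m`. -/
theorem or_reduction_correct (n : ℕ) (hn : 1 ≤ n) (w : ℕ) (hw : w ≤ n) :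
    w ≠ 0 ↔ ∃ k : ℕ, 1 ≤ k ∧ k ≤ Nat.clog 2 (n + 1) ∧
      Complex.exp (2 * Real.pi * w / 2 ^ k * Complex.I) = -1 := by
  constructor
  · intro hw0
    set v := w.factorization 2 with hv
    set u := ordCompl[2] w with hu
    have hwu : 2 ^ v * u = w := Nat.ordProj_mul_ordCompl_eq_self w 2
    have hodd : Odd u := by
      have h2 : ¬ 2 ∣ u := Nat.not_dvd_ordCompl Nat.prime_two hw0
      exact Nat.odd_iff.mpr (Nat.not_even_iff.mp (fun h => h2 h.two_dvd))
    refine ⟨v + 1, Nat.le_add_left 1 v, ?_, ?_⟩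
    · have h1 : 2 ^ v ≤ w := Nat.le_of_dvd (Nat.pos_of_ne_zero hw0) (Nat.ordProj_dvd w 2)
      have h2 : w < 2 ^ Nat.clog 2 (n + 1) :=
        lt_of_le_of_lt hw (Nat.lt_of_lt_of_le (Nat.lt_succ_self n)
          (Nat.le_pow_clog one_lt_two _))
      have : 2 ^ v < 2 ^ Nat.clog 2 (n + 1) := lt_of_le_of_lt h1 h2
      exact Nat.pow_lt_pow_iff_right one_lt_two |>.mp this
    · have harg : (2 * (Real.pi : ℂ) * w / 2 ^ (v + 1) * Complex.I)
          = u * (Real.pi * Complex.I) := by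
        have hcast : (w : ℂ) = 2 ^ v * u := by exact_mod_cast hwu.symm
        rw [hcast]
        have h2 : (2 : ℂ) ^ (v + 1) ≠ 0 := pow_ne_zero _ two_ne_zero
        field_simp
        ring
      rw [harg, Complex.exp_nat_mul, Complex.exp_pi_mul_I]
      exact hodd.neg_one_pow
  · rintro ⟨k, -, -, hk⟩ rfl
    simp at hk
    exact (by norm_num : (1 : ℂ) ≠ -1) hk
end

section
/- For every integer q ≥ 1 and every real number α with |α| ≤ π/(4q), the modulus of ∑_{y=0}^{q−1} e^{iαy} is at least q/√2. -/
open Finset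

/-- Constructive-interference bound: for `q ≥ 1` and `|α| ≤ π/(4q)`,
`|∑_{y=0}^{q−1} e^{iαy}| ≥ q/√2`. -/
theorem abs_sum_exp_ge_of_small_angle (q : ℕ) (hq : 1 ≤ q) (α : ℝ)
    (hα : |α| ≤ Real.pi / (4 * q)) :
    (q : ℝ) / Real.sqrt 2 ≤
      ‖∑ y ∈ Finset.range q, Complex.exp (α * y * Complex.I)‖ := by
  have hqpos : (0:ℝ) < q := by exact_mod_cast hq
  have key : (q : ℝ) / Real.sqrt 2 ≤
      (∑ y ∈ Finset.range q, Complex.exp (α * y * Complex.I)).re := by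
    rw [Complex.re_sum]
    have hterm : ∀ y ∈ Finset.range q,
        Real.sqrt 2 / 2 ≤ (Complex.exp (α * y * Complex.I)).re := by
      intro y hy
      have hylt : (y:ℝ) < q := by exact_mod_cast Finset.mem_range.mp hy
      have : ((α:ℂ) * y * Complex.I) = ((α * y : ℝ) : ℂ) * Complex.I := by push_cast; ring
      rw [this, Complex.exp_ofReal_mul_I_re]
      have habs : |α * y| ≤ Real.pi / 4 := by
        rw [abs_mul, abs_of_nonneg (by positivity : (0:ℝ) ≤ (y:ℝ))]
        calc |α| * y ≤ (Real.pi / (4 * q)) * q := by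
              apply mul_le_mul hα (le_of_lt hylt) (by positivity) (by positivity)
          _ = Real.pi / 4 := by field_simp
      have hcos : Real.cos (Real.pi / 4) ≤ Real.cos (α * y) := by
        rw [← Real.cos_abs (α * y)]
        apply Real.cos_le_cos_of_nonneg_of_le_pi (abs_nonneg _) _ habs
        linarith [Real.pi_pos]
      rwa [Real.cos_pi_div_four] at hcos
    calc (q : ℝ) / Real.sqrt 2 = ∑ _y ∈ Finset.range q, Real.sqrt 2 / 2 := by
          rw [Finset.sum_const, Finset.card_range, nsmul_eq_mul]
          rw [div_eq_iff (by positivity : Real.sqrt 2 ≠ 0)]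
          have : Real.sqrt 2 * Real.sqrt 2 = 2 := Real.mul_self_sqrt (by norm_num)
          nlinarith
      _ ≤ _ := Finset.sum_le_sum hterm
  exact key.trans (Complex.re_le_norm _)
end
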